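/- Let G be a DAG on a finite vertex set with distinguished vertices A ≠ Ŷ. Assume that no vertex is a parent of A (there is no directed edge into A) and that every vertex other than A and Ŷ is a parent of Ŷ (has a directed edge into Ŷ). Then X(P) is completely ordered with respect to A; more precisely, for all u, v ∈ X(P) with a directed edge u → v, u is prior to v with respect to A. (Proposition 3 of the paper.) -/

import Mathlib

/-- A path in a directed graph `D`: a list of at least two pairwise distinct
vertices in which every two consecutive vertices `u, v` satisfy `D u v` or `D v u`. -/
def IsPath {V : Type*} (D : V → V → Prop) (p : List V) : Prop :=
  2 ≤ p.length ∧ p.Nodup ∧ p.Chain' (fun u v => D u v ∨ D v u)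

/-- A path is active if no internal vertex on it is a collider. -/
def IsActive {V : Type*} (D : V → V → Prop) (p : List V) : Prop :=
  ∀ a b c : V, [a, b, c] <:+: p → ¬ (D a b ∧ D c b)

/-- An active path from `A` to `Yh`. -/
def IsActivePathFromTo {V : Type*} (D : V → V → Prop) (A Yh : V) (p : List V) : Prop :=
  IsPath D p ∧ IsActive D p ∧ p.head? = some A ∧ p.getLast? = some Yh

/-- `u` occurs before `v` on the list `p`. -/
def OccursBefore {V : Type*} (p : List V) (u v : V) : Prop :=
  ∃ i j : Fin p.length, i < j ∧ p.get i = u ∧ p.get j = v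

/-- `x ∈ X(P)`: `x` is a vertex other than `A` and `Yh` lying on some active
path from `A` to `Yh`. -/
def InXP {V : Type*} (D : V → V → Prop) (A Yh x : V) : Prop :=
  x ≠ A ∧ x ≠ Yh ∧ ∃ p : List V, IsActivePathFromTo D A Yh p ∧ x ∈ p

/-- `u` is prior to `v` with respect to `A`: some active path from `A` to `Yh`
contains both `u` and `v`, and on every such path `u` occurs before `v`. -/
def PriorTo {V : Type*} (D : V → V → Prop) (A Yh u v : V) : Prop :=
  (∃ p : List V, IsActivePathFromTo D A Yh p ∧ u ∈ p ∧ v ∈ p) ∧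
  (∀ p : List V, IsActivePathFromTo D A Yh p → u ∈ p → v ∈ p → OccursBefore p u v)

section Aux

variable {V : Type*} {D : V → V → Prop}

lemma transGen_of_chain' {p : List V} (h : p.Chain' D) :
    ∀ j (hj : j < p.length) i (hi : i < j), Relation.TransGen D p[i] p[j] := by
  intro j
  induction j with
  | zero => omega
  | succ j ih =>
    intro hj i hij
    have hD : D p[j] p[j+1] := by
      have := List.isChain_iff_getElem.mp h j (by omega)
      simpa [List.get_eq_getElem] using this
    rcases Nat.lt_or_ge i j with h' | h'
    · exact (ih (by omega) i h').tail hD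
    · have : i = j := by omega
      subst this; exact Relation.TransGen.single hD

lemma chain_forward :
    ∀ (t : List V) (a b : V), D a b →
      (∀ x y z : V, [x, y, z] <:+: (a :: b :: t) → ¬ (D x y ∧ D z y)) →
      (a :: b :: t).Chain' (fun u v => D u v ∨ D v u) →
      (a :: b :: t).Chain' D := by
  intro t
  induction t with
  | nil =>
    intro a b hab _ _
    exact List.isChain_cons_cons.mpr ⟨hab, List.isChain_singleton _⟩
  | cons c t ih =>
    intro a b hab hact hch
    have hch' := List.isChain_cons_cons.mp hch
    have hbc : D b c := by
      rcases (List.isChain_cons_cons.mp hch'.2).1 with h | h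
      · exact h
      · exact absurd ⟨hab, h⟩ (hact a b c ⟨[], t, rfl⟩)
    have hact' : ∀ x y z : V, [x, y, z] <:+: (b :: c :: t) → ¬ (D x y ∧ D z y) := by
      intro x y z hinf
      exact hact x y z (hinf.trans (List.infix_cons (List.infix_refl _)))
    exact List.isChain_cons_cons.mpr ⟨hab, ih b c hbc hact' hch'.2⟩

lemma directed_of_active {A Yh : V} (hA : ∀ w, ¬ D w A) {p : List V}
    (hp : IsActivePathFromTo D A Yh p) : p.Chain' D := by
  obtain ⟨⟨hlen, hnd, hch⟩, hact, hhead, hlast⟩ := hp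
  rcases p with _ | ⟨a, _ | ⟨b, t⟩⟩
  · simp at hlen
  · simp at hlen
  · have ha : a = A := by simpa using hhead
    have hab : D a b := by
      rcases (List.isChain_cons_cons.mp hch).1 with h | h
      · exact h
      · exact absurd h (by rw [ha]; exact hA b)
    exact chain_forward t a b hab hact hch

lemma active_of_chain (hasym : ∀ u v, D u v → ¬ D v u) {p : List V}
    (h : p.Chain' D) : IsActive D p := by
  rintro a b c hinf ⟨_, hcb⟩
  have h3 : List.Chain' D [a, b, c] := h.infix hinf
  have hbc : D b c := (List.isChain_cons_cons.mp (List.isChain_cons_cons.mp h3).2).1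
  exact hasym b c hbc hcb

end Aux

/-- Proposition 3: in a DAG in which no vertex is a parent of `A` and every
vertex other than `A` and `Yh` is a parent of `Yh`, the set `X(P)` is
completely ordered with respect to `A`: for all `u, v ∈ X(P)` with a directed
edge `u → v`, `u` is prior to `v` with respect to `A`. -/
theorem xp_completely_ordered
    {V : Type*} [Fintype V] (D : V → V → Prop)
    (hirr : Irreflexive D) (hasym : ∀ u v, D u v → ¬ D v u)
    (hdag : Irreflexive (Relation.TransGen D))
    (A Yh : V) (hAY : A ≠ Yh)
    (hA : ∀ w, ¬ D w A)
    (hY : ∀ w, w ≠ A → w ≠ Yh → D w Yh)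
    (u v : V) (hu : InXP D A Yh u) (hv : InXP D A Yh v)
    (huv : D u v) :
    PriorTo D A Yh u v := by
  classical
  have huv_ne : u ≠ v := fun h => hirr u (h ▸ huv)
  constructor
  · -- existence
    obtain ⟨huA, huY, p, hp, hup⟩ := hu
    have hchain : p.Chain' D := directed_of_active hA hp
    obtain ⟨⟨hlen, hnd, hch⟩, hact, hhead, hlast⟩ := hp
    obtain ⟨k, hk, hku⟩ := List.mem_iff_getElem.mp hup
    have hplast : p[p.length - 1]'(by omega) = Yh := by
      have h' := hlast
      rw [List.getLast?_eq_getElem? (l := p), List.getElem?_eq_getElem (by omega)] at h'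
      simpa using h'
    have hp0 : p[0]'(by omega) = A := by
      have h' := hhead
      rw [List.head?_eq_getElem? (l := p), List.getElem?_eq_getElem (by omega)] at h'
      simpa using h'
    have hklt : k < p.length - 1 := by
      rcases Nat.lt_or_ge k (p.length - 1) with h | h
      · exact h
      · exfalso
        have hk' : k = p.length - 1 := by omega
        subst hk'
        exact huY (hku.symm.trans hplast)
    set t := p.take (k + 1) with ht
    have htlen : t.length = k + 1 := by
      simp [ht, Nat.min_eq_left (by omega : k + 1 ≤ p.length)]
    have htget : ∀ i (hi : i < t.length), t[i] = p[i]'(by omega) := by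
      intro i hi
      simp [ht]
    have htu : t[k]'(by omega) = u := by rw [htget k (by omega)]; exact hku
    have hvt : v ∉ t := by
      intro hmem
      obtain ⟨i, hi, hiv⟩ := List.mem_iff_getElem.mp hmem
      rw [htget i hi] at hiv
      have hik : i < k := by
        rcases Nat.lt_or_ge i k with h | h
        · exact h
        · exfalso
          have hik' : i = k := by omega
          subst hik'
          exact huv_ne (hku.symm.trans hiv)
      have htg : Relation.TransGen D v u := by
        have h' := transGen_of_chain' hchain k (by omega) i hik
        rwa [hiv, hku] at h'
      exact hdag v (htg.tail huv)
    have hYt : Yh ∉ t := by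
      intro hmem
      obtain ⟨i, hi, hiY⟩ := List.mem_iff_getElem.mp hmem
      rw [htget i hi] at hiY
      have : i = p.length - 1 :=
        (hnd.getElem_inj_iff (hi := by omega) (hj := by omega)).mp (hiY.trans hplast.symm)
      omega
    have htnd : t.Nodup := (List.take_sublist _ _).nodup hnd
    have hvY : v ≠ Yh := hv.2.1
    have hDvY : D v Yh := hY v hv.1 hv.2.1
    have htlast : t.getLast? = some u := by
      rw [List.getLast?_eq_getElem? (l := t), htlen]
      simp only [Nat.add_sub_cancel]
      rw [List.getElem?_eq_getElem (by omega)]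
      exact congrArg some htu
    have hthead : t.head? = some A := by
      rw [List.head?_eq_getElem? (l := t), List.getElem?_eq_getElem (by omega : 0 < t.length)]
      exact congrArg some ((htget 0 (by omega)).trans hp0)
    have htne : t ≠ [] := by
      intro h; rw [h] at htlen; simp at htlen
    have hqchain : List.Chain' D (t ++ [v, Yh]) := by
      refine (List.isChain_append).mpr ⟨hchain.prefix (List.take_prefix _ _), ?_, ?_⟩
      · exact List.isChain_cons_cons.mpr ⟨hDvY, List.isChain_singleton _⟩
      · intro x hx y hy
        rw [htlast] at hx
        simp only [Option.mem_def, Option.some.injEq, List.head?_cons] at hx hy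
        exact hx ▸ hy ▸ huv
    refine ⟨t ++ [v, Yh], ⟨⟨?_, ?_, ?_⟩, ?_, ?_, ?_⟩, ?_, ?_⟩
    · simp only [List.length_append, htlen, List.length_cons, List.length_nil]; omega
    · rw [List.nodup_append']
      refine ⟨htnd, by simp [hvY], ?_⟩
      intro x hx
      simp only [List.mem_cons, List.mem_singleton, List.not_mem_nil, or_false]
      rintro (rfl | rfl)
      · exact hvt hx
      · exact hYt hx
    · exact hqchain.imp (fun a b h => Or.inl h)
    · exact active_of_chain hasym hqchain
    · rw [List.head?_append_of_ne_nil _ htne]; exact hthead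
    · rw [List.getLast?_append_of_ne_nil _ (by simp)]
      simp
    · exact List.mem_append.mpr (Or.inl (List.mem_iff_getElem.mpr ⟨k, by omega, htu⟩))
    · simp
  · -- universality
    intro p hp hup hvp
    have hchain : p.Chain' D := directed_of_active hA hp
    obtain ⟨i, hi, hiu⟩ := List.mem_iff_getElem.mp hup
    obtain ⟨j, hj, hjv⟩ := List.mem_iff_getElem.mp hvp
    rcases Nat.lt_or_ge i j with h | h
    · exact ⟨⟨i, hi⟩, ⟨j, hj⟩, h, by simpa using hiu, by simpa using hjv⟩
    · exfalso
      rcases Nat.lt_or_ge j i with h' | h'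
      · have htg : Relation.TransGen D v u := by
          have h'' := transGen_of_chain' hchain i hi j h'
          rwa [hiu, hjv] at h''
        exact hdag u (Relation.TransGen.head huv htg)
      · have hij : i = j := by omega
        subst hij
        exact huv_ne (hiu.symm.trans hjv)
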